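/- Let n = 2m−1 be odd and x_0 > x_1 > ... > x_n be given. Suppose two coefficient systems {(a_k, b_k)}_{k=0}^{n−1} and {(ã_k, b̃_k)}_{k=0}^{n−1}, both satisfying positivity (a_k > 0, ã_k > 0) and reflection (a_k = a_{n−k}, b_k = b_{n−k}, and similarly for the tilde system, for 1 ≤ k ≤ n−1), generate via the recurrence p_{k+1} + p_{k−1} = (a_k x + b_k) p_k (with p_0 = 1, p_1 = a_0 x + b_0, and analogously p̃_k) polynomial sequences both satisfying the alternation condition p_{n−k}(x_j) = (−1)^j p_k(x_j) and p̃_{n−k}(x_j) = (−1)^j p̃_k(x_j) for all 0 ≤ j, k ≤ n. Then ã_k = a_k and b̃_k = b_k for all 0 ≤ k ≤ n−1, and p̃_k = p_k for all 0 ≤ k ≤ n. -/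

import Mathlib

open Polynomial Finset


lemma aux_deg (n : ℕ) (a b : ℕ → ℝ) (p : ℕ → Polynomial ℝ)
    (hp0 : p 0 = 1) (hp1 : p 1 = C (a 0) * X + C (b 0))
    (hrec : ∀ k, 1 ≤ k → k ≤ n - 1 →
      p (k+1) + p (k-1) = (C (a k) * X + C (b k)) * p k)
    (hpos : ∀ k, k ≤ n - 1 → 0 < a k) :
    ∀ k, k ≤ n → (p k).natDegree = k ∧
      (p k).leadingCoeff = ∏ i ∈ Finset.range k, a i ∧ p k ≠ 0 := by
  intro k
  induction k using Nat.strong_induction_on with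
  | _ k ih =>
    intro hk
    match k with
    | 0 => simp [hp0]
    | 1 =>
      have ha0 : a 0 ≠ 0 := ne_of_gt (hpos 0 (Nat.zero_le _))
      refine ⟨by rw [hp1]; exact natDegree_linear ha0, ?_, ?_⟩
      · rw [hp1, leadingCoeff_linear ha0]; simp
      · rw [hp1]
        exact ne_zero_of_natDegree_gt (n := 0) (by rw [natDegree_linear ha0]; omega)
    | (k+2) =>
      obtain ⟨d1, lc1, ne1⟩ := ih (k+1) (by omega) (by omega)
      obtain ⟨d0, lc0, ne0⟩ := ih k (by omega) (by omega)
      have ha : a (k+1) ≠ 0 := ne_of_gt (hpos (k+1) (by omega))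
      have e := hrec (k+1) (by omega) (by omega)
      simp only [Nat.add_sub_cancel] at e
      have hp2 : p (k+2) = (C (a (k+1)) * X + C (b (k+1))) * p (k+1) - p k :=
        eq_sub_of_add_eq e
      have hlne : (C (a (k+1)) * X + C (b (k+1))) ≠ 0 :=
        ne_zero_of_natDegree_gt (n := 0) (by rw [natDegree_linear ha]; omega)
      set u := (C (a (k+1)) * X + C (b (k+1))) * p (k+1) with hu
      have hune : u ≠ 0 := mul_ne_zero hlne ne1
      have hud : u.natDegree = k + 2 := by
        rw [hu, natDegree_mul hlne ne1, natDegree_linear ha, d1]; omega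
      have hulc : u.leadingCoeff = ∏ i ∈ Finset.range (k+2), a i := by
        rw [hu, leadingCoeff_mul, leadingCoeff_linear ha, lc1, mul_comm]
        exact (Finset.prod_range_succ a (k+1)).symm
      have hdlt : (p k).degree < u.degree := by
        rw [degree_eq_natDegree ne0, degree_eq_natDegree hune, d0, hud]
        exact_mod_cast by omega
      have hdeg2 : (p (k+2)).natDegree = k + 2 := by
        rw [hp2]
        rw [natDegree_eq_of_degree_eq (degree_sub_eq_left_of_degree_lt hdlt)]
        exact hud
      have hlc2 : (p (k+2)).leadingCoeff = ∏ i ∈ Finset.range (k+2), a i := by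
        rw [hp2, leadingCoeff_sub_of_degree_lt hdlt, hulc]
      refine ⟨hdeg2, hlc2, ?_⟩
      intro h
      rw [h] at hlc2
      have : 0 < ∏ i ∈ Finset.range (k+2), a i :=
        Finset.prod_pos fun i hi => hpos i (by simp at hi; omega)
      rw [leadingCoeff_zero] at hlc2
      exact (ne_of_gt this) hlc2.symm


lemma aux_factor (m : ℕ) (hm : 1 ≤ m) (q : Polynomial ℝ) (L : ℝ)
    (y : ℕ → ℝ) (hyinj : ∀ i j, i < m → j < m → y i = y j → i = j)
    (hqdeg : q.natDegree = m) (hq0 : q ≠ 0) (hqlc : q.leadingCoeff = L)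
    (hroot : ∀ i, i < m → q.eval (y i) = 0) :
    q = C L * ∏ i ∈ Finset.range m, (X - C (y i)) := by
  have hL : L ≠ 0 := hqlc ▸ leadingCoeff_ne_zero.mpr hq0
  set Q := C L * ∏ i ∈ Finset.range m, (X - C (y i)) with hQ
  have hmon : (∏ i ∈ Finset.range m, (X - C (y i))).Monic :=
    monic_prod_of_monic _ _ fun i _ => monic_X_sub_C _
  have hQdeg : Q.natDegree = m := by
    rw [hQ, natDegree_C_mul hL, natDegree_prod_of_monic _ _
      (fun i _ => monic_X_sub_C _)]
    simp [natDegree_X_sub_C]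
  have hQlc : Q.leadingCoeff = L := by
    rw [hQ, leadingCoeff_mul, leadingCoeff_C, hmon.leadingCoeff, mul_one]
  have hQ0 : Q ≠ 0 := fun h => hL (by rw [← hQlc, h, leadingCoeff_zero])
  have hlt : (q - Q).degree < q.degree :=
    degree_sub_lt (by rw [degree_eq_natDegree hq0, degree_eq_natDegree hQ0,
      hqdeg, hQdeg]) hq0 (by rw [hqlc, hQlc])
  have hnd : (q - Q).natDegree < m := by
    rcases eq_or_ne (q - Q) 0 with h | h
    · rw [h, natDegree_zero]; omega
    · rw [← hqdeg]; exact natDegree_lt_natDegree h hlt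
  have hz : q - Q = 0 := by
    apply eq_zero_of_natDegree_lt_card_of_eval_eq_zero' (q - Q)
      ((Finset.range m).image y)
    · intro z hz
      obtain ⟨i, hi, rfl⟩ := Finset.mem_image.mp hz
      rw [Finset.mem_range] at hi
      have hQz : Q.eval (y i) = 0 := by
        rw [hQ]
        simp only [eval_mul, eval_C, eval_prod]
        rw [Finset.prod_eq_zero (Finset.mem_range.mpr hi)]
        · ring
        · simp
      rw [eval_sub, hroot i hi, hQz, sub_zero]
    · rw [Finset.card_image_of_injOn, Finset.card_range]
      · exact hnd
      · intro i hi j hj hij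
        exact hyinj i j (Finset.mem_range.mp hi) (Finset.mem_range.mp hj) hij
  exact sub_eq_zero.mp hz

lemma aux_split (n m : ℕ) (hm : 1 ≤ m) (hn : n = 2*m - 1)
    (x : ℕ → ℝ) (hx : ∀ j, j < n → x (j+1) < x j)
    (a : ℕ → ℝ) (p : ℕ → Polynomial ℝ)
    (hdeg : ∀ k, k ≤ n → (p k).natDegree = k ∧
      (p k).leadingCoeff = ∏ i ∈ Finset.range k, a i ∧ p k ≠ 0)
    (halt : ∀ j k, j ≤ n → k ≤ n →
      (p (n - k)).eval (x j) = (-1)^j * (p k).eval (x j)) :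
    p m - p (m-1) =
      C (∏ i ∈ Finset.range m, a i) * ∏ i ∈ Finset.range m, (X - C (x (2*i)))
    ∧ p m + p (m-1) =
      C (∏ i ∈ Finset.range m, a i) * ∏ i ∈ Finset.range m, (X - C (x (2*i+1))) := by
  have hmn : m ≤ n := by omega
  have hmono : ∀ i j, i < j → j ≤ n → x j < x i := by
    intro i j hij hj
    induction j with
    | zero => omega
    | succ j ih =>
      rcases Nat.lt_or_ge i j with h | h
      · exact lt_trans (hx j (by omega)) (ih h (by omega))
      · have hij' : i = j := by omega
        subst hij'
        exact hx i (by omega)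
  have hinj : ∀ i j, i ≤ n → j ≤ n → x i = x j → i = j := by
    intro i j hi hj hxe
    rcases lt_trichotomy i j with h | h | h
    · exact absurd hxe (hmono i j h hj).ne'
    · exact h
    · exact absurd hxe (hmono j i h hi).ne
  obtain ⟨dm, lcm, nem⟩ := hdeg m hmn
  obtain ⟨dm1, lcm1, nem1⟩ := hdeg (m-1) (by omega)
  have hdlt : (p (m-1)).degree < (p m).degree := by
    rw [degree_eq_natDegree nem, degree_eq_natDegree nem1, dm, dm1]
    exact_mod_cast by omega
  have hnm1 : n - (m-1) = m := by omega
  have hLpos : (∏ i ∈ Finset.range m, a i) ≠ 0 := by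
    rw [← lcm]; exact leadingCoeff_ne_zero.mpr nem
  constructor
  · have hinj2 : ∀ i j, i < m → j < m → x (2*i) = x (2*j) → i = j := by
      intro i j hi hj he
      have := hinj (2*i) (2*j) (by omega) (by omega) he
      omega
    have hd : (p m - p (m-1)).natDegree = m := by
      rw [natDegree_eq_of_degree_eq (degree_sub_eq_left_of_degree_lt hdlt), dm]
    have hlc : (p m - p (m-1)).leadingCoeff = ∏ i ∈ Finset.range m, a i := by
      rw [leadingCoeff_sub_of_degree_lt hdlt, lcm]
    have hne : p m - p (m-1) ≠ 0 := by
      intro h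
      rw [h, leadingCoeff_zero] at hlc
      exact hLpos hlc.symm
    have hrt : ∀ i, i < m → (p m - p (m-1)).eval (x (2*i)) = 0 := by
      intro i hi
      have h := halt (2*i) (m-1) (by omega) (by omega)
      rw [hnm1] at h
      rw [eval_sub, h, pow_mul]
      norm_num
    exact aux_factor m hm _ _ _ hinj2 hd hne hlc hrt
  · have hinj2 : ∀ i j, i < m → j < m → x (2*i+1) = x (2*j+1) → i = j := by
      intro i j hi hj he
      have := hinj (2*i+1) (2*j+1) (by omega) (by omega) he
      omega
    have hd : (p m + p (m-1)).natDegree = m := by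
      rw [add_comm,
        natDegree_eq_of_degree_eq (degree_add_eq_right_of_degree_lt hdlt), dm]
    have hlc : (p m + p (m-1)).leadingCoeff = ∏ i ∈ Finset.range m, a i := by
      rw [add_comm, leadingCoeff_add_of_degree_lt hdlt, lcm]
    have hne : p m + p (m-1) ≠ 0 := by
      intro h
      rw [h, leadingCoeff_zero] at hlc
      exact hLpos hlc.symm
    have hrt : ∀ i, i < m → (p m + p (m-1)).eval (x (2*i+1)) = 0 := by
      intro i hi
      have h := halt (2*i+1) (m-1) (by omega) (by omega)
      rw [hnm1] at h
      rw [eval_add, h, pow_succ, pow_mul]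
      norm_num
    exact aux_factor m hm _ _ _ hinj2 hd hne hlc hrt



lemma aux_step (n : ℕ) (a b ta tb : ℕ → ℝ) (p tp : ℕ → Polynomial ℝ)
    (c : ℝ) (hc : c ≠ 0)
    (hdeg : ∀ k, k ≤ n → (p k).natDegree = k ∧ p k ≠ 0)
    (htdeg : ∀ k, k ≤ n → (tp k).natDegree = k)
    (hrec : ∀ k, 1 ≤ k → k ≤ n - 1 →
      p (k+1) + p (k-1) = (C (a k) * X + C (b k)) * p k)
    (htrec : ∀ k, 1 ≤ k → k ≤ n - 1 →
      tp (k+1) + tp (k-1) = (C (ta k) * X + C (tb k)) * tp k)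
    (k : ℕ) (hk1 : 1 ≤ k) (hk : k + 1 ≤ n)
    (h1 : tp (k+1) = C c * p (k+1)) (h0 : tp k = C c * p k) :
    ta k = a k ∧ tb k = b k ∧ tp (k-1) = C c * p (k-1) := by
  have e1 := hrec k hk1 (by omega)
  have e2 := htrec k hk1 (by omega)
  rw [h1, h0] at e2
  have key : tp (k-1) - C c * p (k-1) =
      C c * ((C (ta k - a k) * X + C (tb k - b k)) * p k) := by
    simp only [C_sub]
    linear_combination e2 - C c * e1
  obtain ⟨dk, nek⟩ := hdeg k (by omega)
  have hl0 : C (ta k - a k) * X + C (tb k - b k) = 0 := by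
    by_contra hne
    have hd1 : (C c * ((C (ta k - a k) * X + C (tb k - b k)) * p k)).natDegree
        = (C (ta k - a k) * X + C (tb k - b k)).natDegree + k := by
      rw [natDegree_C_mul hc, natDegree_mul hne nek, dk]
    have h1' : (tp (k-1)).natDegree = k-1 := htdeg (k-1) (by omega)
    have h2' : (C c * p (k-1)).natDegree ≤ k-1 :=
      (natDegree_C_mul_le _ _).trans (le_of_eq (hdeg (k-1) (by omega)).1)
    have hle : (tp (k-1) - C c * p (k-1)).natDegree ≤ k - 1 :=
      (natDegree_sub_le _ _).trans (max_le (le_of_eq h1') h2')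
    rw [key, hd1] at hle
    omega
  have hta : ta k - a k = 0 := by
    have := congrArg (fun q : Polynomial ℝ => q.coeff 1) hl0
    simpa [coeff_C] using this
  have htb : tb k - b k = 0 := by
    have := congrArg (fun q : Polynomial ℝ => q.coeff 0) hl0
    simpa [coeff_C] using this
  refine ⟨by linarith, by linarith, ?_⟩
  rw [hl0] at key
  simpa [sub_eq_zero] using key

theorem uniqueness_odd (n m : ℕ) (hm : 1 ≤ m) (hn : n = 2*m - 1)
    (x : ℕ → ℝ) (hx : ∀ j, j < n → x (j+1) < x j)
    (a b ta tb : ℕ → ℝ) (p tp : ℕ → Polynomial ℝ)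
    (hp0 : p 0 = 1) (hp1 : p 1 = C (a 0) * X + C (b 0))
    (hrec : ∀ k, 1 ≤ k → k ≤ n - 1 →
      p (k+1) + p (k-1) = (C (a k) * X + C (b k)) * p k)
    (hpos : ∀ k, k ≤ n - 1 → 0 < a k)
    (hrefl : ∀ k, 1 ≤ k → k ≤ n - 1 → a k = a (n - k) ∧ b k = b (n - k))
    (htp0 : tp 0 = 1) (htp1 : tp 1 = C (ta 0) * X + C (tb 0))
    (htrec : ∀ k, 1 ≤ k → k ≤ n - 1 →
      tp (k+1) + tp (k-1) = (C (ta k) * X + C (tb k)) * tp k)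
    (htpos : ∀ k, k ≤ n - 1 → 0 < ta k)
    (htrefl : ∀ k, 1 ≤ k → k ≤ n - 1 → ta k = ta (n - k) ∧ tb k = tb (n - k))
    (halt : ∀ j k, j ≤ n → k ≤ n →
      (p (n - k)).eval (x j) = (-1)^j * (p k).eval (x j))
    (htalt : ∀ j k, j ≤ n → k ≤ n →
      (tp (n - k)).eval (x j) = (-1)^j * (tp k).eval (x j)) :
    (∀ k, k ≤ n - 1 → ta k = a k ∧ tb k = b k) ∧
    (∀ k, k ≤ n → tp k = p k) := by
  have hdeg := aux_deg n a b p hp0 hp1 hrec hpos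
  have htdeg := aux_deg n ta tb tp htp0 htp1 htrec htpos
  have hdeg' : ∀ k, k ≤ n → (p k).natDegree = k ∧ p k ≠ 0 :=
    fun k hk => ⟨(hdeg k hk).1, (hdeg k hk).2.2⟩
  have htdeg1 : ∀ k, k ≤ n → (tp k).natDegree = k := fun k hk => (htdeg k hk).1
  have hL : (0:ℝ) < ∏ i ∈ Finset.range m, a i :=
    Finset.prod_pos fun i hi => hpos i (by simp at hi; omega)
  have htL : (0:ℝ) < ∏ i ∈ Finset.range m, ta i :=
    Finset.prod_pos fun i hi => htpos i (by simp at hi; omega)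
  obtain ⟨he, ho⟩ := aux_split n m hm hn x hx a p hdeg halt
  obtain ⟨hte, hto⟩ := aux_split n m hm hn x hx ta tp htdeg htalt
  set c := (∏ i ∈ Finset.range m, ta i) / (∏ i ∈ Finset.range m, a i) with hcdef
  have hc : c ≠ 0 := div_ne_zero htL.ne' hL.ne'
  have hCcL : C c * C (∏ i ∈ Finset.range m, a i)
      = C (∏ i ∈ Finset.range m, ta i) := by
    rw [← C_mul, hcdef, div_mul_cancel₀ _ hL.ne']
  have h2 : (2:Polynomial ℝ) ≠ 0 := by norm_num
  have hcm : tp m = C c * p m := by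
    apply mul_left_cancel₀ h2
    linear_combination hte + hto - C c * he - C c * ho
      - (∏ i ∈ Finset.range m, (X - C (x (2*i)))
         + ∏ i ∈ Finset.range m, (X - C (x (2*i+1)))) * hCcL
  have hcm1 : tp (m-1) = C c * p (m-1) := by
    apply mul_left_cancel₀ h2
    linear_combination hto - hte - C c * ho + C c * he
      - (∏ i ∈ Finset.range m, (X - C (x (2*i+1)))
         - ∏ i ∈ Finset.range m, (X - C (x (2*i)))) * hCcL
  have down : ∀ t, t ≤ m - 1 →
      tp (m-1-t) = C c * p (m-1-t) ∧ tp (m-t) = C c * p (m-t) := by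
    intro t
    induction t with
    | zero =>
      intro _
      simp only [Nat.sub_zero]
      exact ⟨hcm1, hcm⟩
    | succ t ih =>
      intro ht
      obtain ⟨h0, h1⟩ := ih (by omega)
      have hk1 : 1 ≤ m - 1 - t := by omega
      rw [show m - t = (m - 1 - t) + 1 by omega] at h1
      obtain ⟨_, _, h⟩ := aux_step n a b ta tb p tp c hc hdeg' htdeg1 hrec htrec
        (m-1-t) hk1 (by omega) h1 h0
      constructor
      · rw [show m-1-(t+1) = (m-1-t) - 1 by omega]; exact h
      · rw [show m-(t+1) = m-1-t by omega]; exact h0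
  have hab : ∀ k, 1 ≤ k → k ≤ m-1 → ta k = a k ∧ tb k = b k := by
    intro k h1k hk
    have hp2 := down (m-1-k) (by omega)
    rw [show m-1-(m-1-k) = k by omega, show m-(m-1-k) = k+1 by omega] at hp2
    obtain ⟨e0, e1⟩ := hp2
    obtain ⟨h, h', _⟩ := aux_step n a b ta tb p tp c hc hdeg' htdeg1 hrec htrec
      k h1k (by omega) e1 e0
    exact ⟨h, h'⟩
  have hc1 : c = 1 := by
    have h' := (down (m-1) le_rfl).1
    rw [show m-1-(m-1) = 0 by omega, htp0, hp0, mul_one] at h'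
    have h'' := congrArg (fun q : Polynomial ℝ => q.coeff 0) h'
    simpa using h''.symm
  have heqm : ∀ k, k ≤ m → tp k = p k := by
    intro k hk
    rcases Nat.lt_or_ge k m with h | h
    · have h' := (down (m-1-k) (by omega)).1
      rw [show m-1-(m-1-k) = k by omega, hc1] at h'
      simpa using h'
    · have hk' : k = m := by omega
      subst hk'
      rw [hcm, hc1]; simp
  have h1eq : tp 1 = p 1 := heqm 1 hm
  rw [hp1, htp1] at h1eq
  have hA : ta 0 = a 0 := by
    have h'' := congrArg (fun q : Polynomial ℝ => q.coeff 1) h1eq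
    simpa [coeff_C] using h''
  have hB : tb 0 = b 0 := by
    have h'' := congrArg (fun q : Polynomial ℝ => q.coeff 0) h1eq
    simpa [coeff_C] using h''
  have hab_all : ∀ k, k ≤ n - 1 → ta k = a k ∧ tb k = b k := by
    intro k hk
    rcases Nat.eq_zero_or_pos k with rfl | h1k
    · exact ⟨hA, hB⟩
    rcases le_or_gt k (m-1) with h | h
    · exact hab k h1k h
    · have hnk1 : 1 ≤ n - k := by omega
      have hnk : n - k ≤ m - 1 := by omega
      obtain ⟨ha', hb'⟩ := hab (n-k) hnk1 hnk
      obtain ⟨hra, hrb⟩ := hrefl k h1k hk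
      obtain ⟨htra, htrb⟩ := htrefl k h1k hk
      exact ⟨by rw [htra, ha', ← hra], by rw [htrb, hb', ← hrb]⟩
  refine ⟨hab_all, ?_⟩
  intro k
  induction k using Nat.strong_induction_on with
  | _ k ih =>
    intro hk
    rcases le_or_gt k m with h | h
    · exact heqm k h
    · obtain ⟨j, rfl⟩ : ∃ j, k = j + 1 := ⟨k-1, by omega⟩
      have hj1 : 1 ≤ j := by omega
      have hjn : j ≤ n - 1 := by omega
      have e1 := hrec j hj1 hjn
      have e2 := htrec j hj1 hjn
      obtain ⟨hra, hrb⟩ := hab_all j hjn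
      rw [hra, hrb, ih j (by omega) (by omega), ih (j-1) (by omega) (by omega)] at e2
      linear_combination e2 - e1
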